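/- The function f(a) = 2^{1/4 + 2a} · a^a · (1 − 2a)^{1/2 − a} is strictly decreasing and continuous on (0, 1/16], with limit 2^{1/4} as a → 0⁺ and f(1/16) > 1. -/

import Mathlib

open Real Filter Set Topology

noncomputable def gAux (a : ℝ) : ℝ :=
  (1 / 4 + 2 * a) * Real.log 2 + a * Real.log a + (1 / 2 - a) * Real.log (1 - 2 * a)

lemma f_eq_exp_gAux {a : ℝ} (ha : 0 < a) (ha' : a < 1 / 2) :
    (2 : ℝ) ^ (1 / 4 + 2 * a) * a ^ a * (1 - 2 * a) ^ (1 / 2 - a) = Real.exp (gAux a) := by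
  have h2 : (0:ℝ) < 1 - 2 * a := by linarith
  rw [Real.rpow_def_of_pos (by norm_num), Real.rpow_def_of_pos ha, Real.rpow_def_of_pos h2,
    gAux, Real.exp_add, Real.exp_add]
  ring_nf

lemma gAux_hasDerivAt {a : ℝ} (ha : 0 < a) (ha' : a < 1 / 2) :
    HasDerivAt gAux (2 * Real.log 2 + Real.log a - Real.log (1 - 2 * a)) a := by
  have h2 : (0:ℝ) < 1 - 2 * a := by linarith
  have d1 := (((hasDerivAt_id a).const_mul 2).const_add (1/4 : ℝ)).mul_const (Real.log 2)
  have d2 : HasDerivAt (fun a : ℝ => a * Real.log a) (Real.log a + 1) a :=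
    Real.hasDerivAt_mul_log ha.ne'
  have d3i := ((hasDerivAt_id a).const_mul 2).const_sub (1 : ℝ)
  have d3l := d3i.log h2.ne'
  have d3a := (hasDerivAt_id a).const_sub (1/2 : ℝ)
  have d3 := d3a.mul d3l
  have := (d1.add d2).add d3
  convert this using 1
  · rfl
  · rfl
  · funext x
    simp only [gAux, Pi.add_apply, Pi.mul_apply, id]
  have h2' : (1:ℝ) - 2 * a ≠ 0 := h2.ne'
  simp only [id]
  field_simp
  ring

lemma gAux_strictAntiOn : StrictAntiOn gAux (Set.Ioc 0 (1 / 16 : ℝ)) := by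
  have hc : ContinuousOn gAux (Set.Ioc 0 (1 / 16 : ℝ)) := fun x hx =>
    ((gAux_hasDerivAt hx.1 (by linarith [hx.2])).continuousAt).continuousWithinAt
  refine strictAntiOn_of_deriv_neg (convex_Ioc _ _) hc ?_
  intro x hx
  rw [interior_Ioc] at hx
  have hx0 : 0 < x := hx.1
  have hx' : x < 1 / 2 := by linarith [hx.2]
  rw [(gAux_hasDerivAt hx0 hx').deriv]
  have h4 : Real.log (4 * x) < Real.log (1 - 2 * x) :=
    Real.log_lt_log (by linarith) (by linarith [hx.2])
  rw [Real.log_mul (by norm_num) hx0.ne', show (4:ℝ) = 2^2 by norm_num,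
    Real.log_pow] at h4
  push_cast at h4
  linarith

open Real in
theorem f_properties :
    StrictAntiOn (fun a : ℝ => (2 : ℝ) ^ (1 / 4 + 2 * a) * a ^ a * (1 - 2 * a) ^ (1 / 2 - a))
        (Set.Ioc 0 (1 / 16)) ∧
    ContinuousOn (fun a : ℝ => (2 : ℝ) ^ (1 / 4 + 2 * a) * a ^ a * (1 - 2 * a) ^ (1 / 2 - a))
        (Set.Ioc 0 (1 / 16)) ∧
    Filter.Tendsto (fun a : ℝ => (2 : ℝ) ^ (1 / 4 + 2 * a) * a ^ a * (1 - 2 * a) ^ (1 / 2 - a))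
        (nhdsWithin 0 (Set.Ioi 0)) (nhds ((2 : ℝ) ^ (1 / 4 : ℝ))) ∧
    1 < (2 : ℝ) ^ (1 / 4 + 2 * (1 / 16 : ℝ)) * (1 / 16 : ℝ) ^ (1 / 16 : ℝ) *
        (1 - 2 * (1 / 16 : ℝ)) ^ (1 / 2 - (1 / 16 : ℝ)) := by
  have hlt : ∀ a ∈ Set.Ioc (0:ℝ) (1/16), 0 < a ∧ a < 1/2 := fun a ha =>
    ⟨ha.1, by linarith [ha.2]⟩
  refine ⟨?_, ?_, ?_, ?_⟩
  · intro x hx y hy hxy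
    dsimp only
    rw [f_eq_exp_gAux (hlt x hx).1 (hlt x hx).2, f_eq_exp_gAux (hlt y hy).1 (hlt y hy).2]
    exact Real.exp_lt_exp.mpr (gAux_strictAntiOn hx hy hxy)
  · intro x hx
    obtain ⟨hx0, hx'⟩ := hlt x hx
    have h2 : (0:ℝ) < 1 - 2 * x := by linarith
    apply ContinuousAt.continuousWithinAt
    have c1 : ContinuousAt (fun a : ℝ => (2:ℝ) ^ (1/4 + 2*a)) x :=
      ContinuousAt.rpow continuousAt_const (by fun_prop) (Or.inl (by norm_num))
    have c2 : ContinuousAt (fun a : ℝ => a ^ a) x :=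
      continuousAt_id.rpow continuousAt_id (Or.inl hx0.ne')
    have c3 : ContinuousAt (fun a : ℝ => (1 - 2*a) ^ (1/2 - a)) x :=
      ContinuousAt.rpow (by fun_prop) (by fun_prop) (Or.inl h2.ne')
    exact (c1.mul c2).mul c3
  · have t2 : Tendsto (fun a : ℝ => Real.exp (a * Real.log a)) (𝓝 0) (𝓝 1) := by
      have h := Real.continuous_mul_log.tendsto 0
      simp only [Real.log_zero, mul_zero, zero_mul] at h
      simpa [Function.comp_def] using (Real.continuous_exp.tendsto 0).comp h
    have c1 : ContinuousAt (fun a : ℝ => (2:ℝ) ^ (1/4 + 2*a)) 0 :=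
      ContinuousAt.rpow continuousAt_const (by fun_prop) (Or.inl (by norm_num))
    have c3 : ContinuousAt (fun a : ℝ => ((1:ℝ) - 2*a) ^ (1/2 - a)) 0 :=
      ContinuousAt.rpow (by fun_prop) (by fun_prop) (Or.inl (by norm_num))
    have t : Tendsto (fun a : ℝ => (2:ℝ) ^ (1/4 + 2*a) * Real.exp (a * Real.log a) *
        ((1:ℝ) - 2*a) ^ (1/2 - a)) (𝓝 0) (𝓝 ((2:ℝ) ^ (1/4 : ℝ))) := by
      have := (c1.tendsto.mul t2).mul c3.tendsto
      simp only [mul_zero, add_zero, sub_zero, mul_one, Real.one_rpow] at this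
      convert this using 2
    refine Tendsto.congr' ?_ (t.mono_left nhdsWithin_le_nhds)
    filter_upwards [self_mem_nhdsWithin] with a (ha : (0:ℝ) < a)
    rw [Real.rpow_def_of_pos ha, mul_comm (Real.log a) a]
  · rw [f_eq_exp_gAux (by norm_num) (by norm_num)]
    nth_rewrite 1 [← Real.exp_zero]
    apply Real.exp_lt_exp.mpr
    have l16 : Real.log ((1:ℝ)/16) = -(4 * Real.log 2) := by
      rw [one_div, Real.log_inv, show (16:ℝ) = 2^4 by norm_num, Real.log_pow]
      push_cast; ring
    have l78 : Real.log (1 - 2 * (1/16 : ℝ)) = Real.log 7 - 3 * Real.log 2 := by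
      rw [show (1 - 2 * (1/16:ℝ)) = 7/8 by norm_num,
        Real.log_div (by norm_num) (by norm_num), show (8:ℝ) = 2^3 by norm_num, Real.log_pow]
      push_cast; ring
    have key : 19 * Real.log 2 < 7 * Real.log 7 := by
      have h := Real.log_lt_log (by positivity) (show (2:ℝ)^(19:ℕ) < 7^(7:ℕ) by norm_num)
      rw [Real.log_pow, Real.log_pow] at h
      push_cast at h; linarith
    rw [gAux, l16, l78]
    nlinarith [Real.log_pos (by norm_num : (1:ℝ) < 2)]
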